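/- For all positive integers d₁,…,d_g one has ρ(d₁,…,d_g) = Σ_{b ∣ ψ(d₁,…,d_g)} ρ*(d₁/gcd(d₁,b²),…,d_g/gcd(d_g,b²)) · (gcd(d₁,b²)·gcd(d₂,b²)⋯gcd(d_g,b²))² / b², where the sum ranges over the positive divisors b of ψ(d₁,…,d_g). -/

import Mathlib

open Finset

/-- The binary quadratic form `q_i(x,y) = a_i x^2 + 2 b_i x y + c_i y^2`. -/
def qf {g : ℕ} (a b c : Fin g → ℤ) (i : Fin g) (x : ℤ × ℤ) : ℤ :=
  a i * x.1 ^ 2 + 2 * b i * x.1 * x.2 + c i * x.2 ^ 2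

/-- The resolvent of two binary quadratic forms. -/
def res₂ (a₁ b₁ c₁ a₂ b₂ c₂ : ℤ) : ℤ :=
  (a₁ * c₂ - a₂ * c₁) ^ 2 - 4 * (b₁ * c₂ - b₂ * c₁) * (a₁ * b₂ - a₂ * b₁)

/-- The quantity `D`. -/
def Dconst (g : ℕ) (a b c : Fin g → ℤ) : ℤ :=
  (∏ p ∈ (Finset.range (2 * g + 1)).filter Nat.Prime, (p : ℤ)) *
    (∏ k, a k * c k * (b k ^ 2 - a k * c k)) *
    ∏ i, ∏ j ∈ Finset.Ioi i, res₂ (a i) (b i) (c i) (a j) (b j) (c j)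

/-- `ρ(d₁,…,d_g)`. -/
def rho (g : ℕ) (a b c : Fin g → ℤ) (d : Fin g → ℕ) : ℕ :=
  (((Finset.range (∏ i, d i)) ×ˢ (Finset.range (∏ i, d i))).filter
    (fun x => ∀ i, (d i : ℤ) ∣ qf a b c i ((x.1 : ℤ), (x.2 : ℤ)))).card

/-- `ρ*(d₁,…,d_g)`. -/
def rhostar (g : ℕ) (a b c : Fin g → ℤ) (d : Fin g → ℕ) : ℕ :=
  (((Finset.range (∏ i, d i)) ×ˢ (Finset.range (∏ i, d i))).filter
    (fun x => (∀ i, (d i : ℤ) ∣ qf a b c i ((x.1 : ℤ), (x.2 : ℤ))) ∧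
      Nat.gcd (Nat.gcd x.1 x.2) (∏ i, d i) = 1)).card

/-- `ψ(d₁,…,d_g) = ∏_p p^{⌈max_i v_p(d_i)/2⌉}`. -/
def psi (g : ℕ) (d : Fin g → ℕ) : ℕ :=
  ∏ p ∈ (∏ i, d i).primeFactors,
    p ^ (((Finset.univ.sup fun i => (d i).factorization p) + 1) / 2)



lemma qf_mul {g : ℕ} (a b c : Fin g → ℤ) (i : Fin g) (e x₁ x₂ : ℤ) :
    qf a b c i (e * x₁, e * x₂) = e ^ 2 * qf a b c i (x₁, x₂) := by
  simp only [qf]; ring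

lemma qf_dvd_congr {g : ℕ} (a b c : Fin g → ℤ) (i : Fin g) (n x₁ x₂ x₁' x₂' : ℤ)
    (h1 : n ∣ x₁' - x₁) (h2 : n ∣ x₂' - x₂) :
    (n ∣ qf a b c i (x₁, x₂) ↔ n ∣ qf a b c i (x₁', x₂')) := by
  have hdiff : n ∣ qf a b c i (x₁', x₂') - qf a b c i (x₁, x₂) := by
    obtain ⟨u, hu⟩ := h1
    obtain ⟨v, hv⟩ := h2
    refine ⟨u * (a i * (x₁' + x₁) + 2 * b i * x₂') + v * (2 * b i * x₁ + c i * (x₂' + x₂)), ?_⟩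
    simp only [qf]
    linear_combination (a i * (x₁' + x₁) + 2 * b i * x₂') * hu +
      (2 * b i * x₁ + c i * (x₂' + x₂)) * hv
  constructor
  · intro h
    have := dvd_add hdiff h
    rwa [sub_add_cancel] at this
  · intro h
    have := dvd_sub h hdiff
    rwa [sub_sub_cancel] at this

/-- Cancellation of a gcd in a divisibility of a product. -/
lemma nat_dvd_mul_iff (n k : ℕ) (hn : n ≠ 0) (q : ℤ) :
    ((n : ℤ) ∣ (k : ℤ) * q ↔ ((n / n.gcd k : ℕ) : ℤ) ∣ q) := by
  have hg : 0 < n.gcd k := Nat.gcd_pos_of_pos_left _ (Nat.pos_of_ne_zero hn)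
  have hn' : n / n.gcd k * n.gcd k = n := Nat.div_mul_cancel (Nat.gcd_dvd_left n k)
  have hk' : k / n.gcd k * n.gcd k = k := Nat.div_mul_cancel (Nat.gcd_dvd_right n k)
  have hcop : Nat.Coprime (n / n.gcd k) (k / n.gcd k) := Nat.coprime_div_gcd_div_gcd hg
  constructor
  · intro h
    have h2 : ((n / n.gcd k : ℕ) : ℤ) * (n.gcd k : ℕ) ∣
        ((k / n.gcd k : ℕ) : ℤ) * q * (n.gcd k : ℕ) := by
      have : ((k / n.gcd k : ℕ) : ℤ) * q * (n.gcd k : ℕ) = (k : ℤ) * q := by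
        rw [mul_comm (((k / n.gcd k : ℕ)):ℤ) q, mul_assoc, ← Nat.cast_mul, hk']; ring
      rw [this, ← Nat.cast_mul, hn']
      exact h
    have h3 : ((n / n.gcd k : ℕ) : ℤ) ∣ ((k / n.gcd k : ℕ) : ℤ) * q :=
      (mul_dvd_mul_iff_right (by exact_mod_cast hg.ne' : ((n.gcd k : ℕ) : ℤ) ≠ 0)).mp h2
    exact Int.dvd_of_dvd_mul_left_of_gcd_one (by rwa [mul_comm] at h3)
      (by rw [Int.gcd_natCast_natCast]; exact hcop)
  · intro h
    have h4 : ((n / n.gcd k : ℕ) : ℤ) * (n.gcd k : ℕ) ∣ q * (k : ℤ) := by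
      refine mul_dvd_mul h ?_
      exact_mod_cast Nat.gcd_dvd_right n k
    rw [← Nat.cast_mul, hn'] at h4
    rwa [mul_comm] at h4

/-- Counting points of a doubly-periodic predicate in a large box. -/
lemma count_box (N k : ℕ) (hN : 0 < N) (P : ℕ × ℕ → Prop) [DecidablePred P]
    (hP : ∀ x : ℕ × ℕ, P x ↔ P (x.1 % N, x.2 % N)) :
    ((range (N * k) ×ˢ range (N * k)).filter P).card
      = k ^ 2 * ((range N ×ˢ range N).filter P).card := by
  have key : ((range (N * k) ×ˢ range (N * k)).filter P).card
      = (((range N ×ˢ range N).filter P) ×ˢ (range k ×ˢ range k)).card := by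
    apply Finset.card_nbij' (fun x => ((x.1 % N, x.2 % N), (x.1 / N, x.2 / N)))
      (fun y => (y.1.1 + N * y.2.1, y.1.2 + N * y.2.2))
    · intro x hx
      simp only [Finset.mem_coe, mem_filter, mem_product, mem_range] at hx ⊢
      obtain ⟨⟨h1, h2⟩, hp⟩ := hx
      exact ⟨⟨⟨Nat.mod_lt _ hN, Nat.mod_lt _ hN⟩, (hP x).mp hp⟩,
        (Nat.div_lt_iff_lt_mul hN).mpr (by rwa [mul_comm] at h1),
        (Nat.div_lt_iff_lt_mul hN).mpr (by rwa [mul_comm] at h2)⟩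
    · intro y hy
      simp only [Finset.mem_coe, mem_filter, mem_product, mem_range] at hy ⊢
      obtain ⟨⟨⟨ha, hb⟩, hp⟩, hu, hv⟩ := hy
      have hbound : ∀ a u : ℕ, a < N → u < k → a + N * u < N * k := by
        intro a u ha hu
        have h := Nat.mul_le_mul_left N (Nat.succ_le_of_lt hu)
        rw [Nat.mul_succ] at h
        omega
      refine ⟨⟨hbound _ _ ha hu, hbound _ _ hb hv⟩, ?_⟩
      rw [hP]
      simpa [Nat.add_mul_mod_self_left, Nat.mod_eq_of_lt ha, Nat.mod_eq_of_lt hb] using hp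
    · intro x hx
      simp only [Nat.mod_add_div]
    · intro y hy
      simp only [Finset.mem_coe, mem_filter, mem_product, mem_range] at hy
      obtain ⟨⟨⟨ha, hb⟩, hp⟩, hu, hv⟩ := hy
      simp [Nat.add_mul_mod_self_left, Nat.mod_eq_of_lt ha, Nat.mod_eq_of_lt hb,
        Nat.add_mul_div_left _ _ hN, Nat.div_eq_of_lt ha, Nat.div_eq_of_lt hb]
  rw [key, Finset.card_product, Finset.card_product, Finset.card_range]
  ring

/-- Transfer of coprimality between numbers with the same prime divisors. -/
lemma coprime_congr {A B : ℕ} (h : ∀ p, p.Prime → (p ∣ A ↔ p ∣ B)) (m : ℕ) :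
    (Nat.Coprime m A ↔ Nat.Coprime m B) := by
  constructor <;> intro hc <;> by_contra hnc
  · obtain ⟨p, hp, hpm, hpB⟩ := Nat.Prime.not_coprime_iff_dvd.mp hnc
    exact Nat.Prime.not_dvd_one hp (hc ▸ Nat.dvd_gcd hpm ((h p hp).mpr hpB))
  · obtain ⟨p, hp, hpm, hpA⟩ := Nat.Prime.not_coprime_iff_dvd.mp hnc
    exact Nat.Prime.not_dvd_one hp (hc ▸ Nat.dvd_gcd hpm ((h p hp).mp hpA))

section Fact

variable {g : ℕ} {d : Fin g → ℕ}

lemma prodd_pos (hd : ∀ i, 0 < d i) : 0 < ∏ i, d i :=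
  Finset.prod_pos (fun i _ => hd i)

lemma fact_prod_apply (hd : ∀ i, 0 < d i) (p : ℕ) :
    (∏ i, d i).factorization p = ∑ i, (d i).factorization p := by
  rw [Nat.factorization_prod (fun i _ => (hd i).ne'), Finset.sum_apply']

lemma psi_pos (hd : ∀ i, 0 < d i) : 0 < psi g d :=
  Finset.prod_pos (fun p hp => pow_pos (Nat.pos_of_mem_primeFactors hp) _)

lemma psi_fact (hd : ∀ i, 0 < d i) (p : ℕ) (hp : p.Prime) :
    (psi g d).factorization p =
      if p ∈ (∏ i, d i).primeFactors
      then ((Finset.univ.sup fun i => (d i).factorization p) + 1) / 2 else 0 := by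
  rw [psi, Nat.factorization_prod
    (fun q hq => pow_ne_zero _ (Nat.pos_of_mem_primeFactors hq).ne'), Finset.sum_apply']
  rw [← Finset.sum_ite_eq' (∏ i, d i).primeFactors p
    (fun q => ((Finset.univ.sup fun i => (d i).factorization q) + 1) / 2)]
  apply Finset.sum_congr rfl
  intro q hq
  rw [(Nat.prime_of_mem_primeFactors hq).factorization_pow, Finsupp.single_apply]

lemma sup_fact_le_sum (p : ℕ) :
    (Finset.univ.sup fun i => (d i).factorization p) ≤ ∑ i, (d i).factorization p :=
  Finset.sup_le fun i _ => Finset.single_le_sum (f := fun i => (d i).factorization p)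
    (fun _ _ => Nat.zero_le _) (mem_univ i)

lemma sup_fact_pos (hd : ∀ i, 0 < d i) {p : ℕ} (hp : p ∈ (∏ i, d i).primeFactors) :
    1 ≤ Finset.univ.sup fun i => (d i).factorization p := by
  obtain ⟨hpp, hpd, -⟩ := Nat.mem_primeFactors.mp hp
  obtain ⟨i, -, hi⟩ := (Prime.dvd_finset_prod_iff hpp.prime d).mp hpd
  calc 1 ≤ (d i).factorization p := (hpp.dvd_iff_one_le_factorization (hd i).ne').mp hi
    _ ≤ _ := Finset.le_sup (f := fun i => (d i).factorization p) (mem_univ i)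

lemma psi_dvd (hd : ∀ i, 0 < d i) : psi g d ∣ ∏ i, d i := by
  rw [← Nat.factorization_le_iff_dvd (psi_pos hd).ne' (prodd_pos hd).ne', Finsupp.le_def]
  intro p
  by_cases hp : p.Prime
  · rw [psi_fact hd p hp, fact_prod_apply hd]
    split_ifs with hmem
    · have h1 := sup_fact_pos hd hmem
      have h2 := sup_fact_le_sum (d := d) p
      omega
    · exact Nat.zero_le _
  · rw [Nat.factorization_eq_zero_of_not_prime _ hp]
    exact Nat.zero_le _

variable {e : ℕ}

lemma e_fact_le (hd : ∀ i, 0 < d i) (he : e ∣ psi g d) (p : ℕ) :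
    e.factorization p ≤ (psi g d).factorization p := by
  have he0 : e ≠ 0 := by rintro rfl; exact (psi_pos hd).ne' (Nat.zero_dvd.mp he)
  exact Finsupp.le_def.mp ((Nat.factorization_le_iff_dvd he0 (psi_pos hd).ne').mpr he) p

lemma gcd_fact (hd : ∀ i, 0 < d i) (he0 : e ≠ 0) (i : Fin g) (p : ℕ) :
    ((d i).gcd (e ^ 2)).factorization p =
      min ((d i).factorization p) (2 * e.factorization p) := by
  rw [Nat.factorization_gcd (hd i).ne' (pow_ne_zero _ he0), Finsupp.inf_apply,
    Nat.factorization_pow, Finsupp.smul_apply, smul_eq_mul]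

lemma G_fact (hd : ∀ i, 0 < d i) (he0 : e ≠ 0) (p : ℕ) :
    (∏ i, (d i).gcd (e ^ 2)).factorization p =
      ∑ i, min ((d i).factorization p) (2 * e.factorization p) := by
  rw [Nat.factorization_prod
    (fun i _ => (Nat.gcd_pos_of_pos_left _ (hd i)).ne'), Finset.sum_apply']
  exact Finset.sum_congr rfl fun i _ => gcd_fact hd he0 i p

lemma e_dvd_G (hg : 2 ≤ g) (hd : ∀ i, 0 < d i) (he : e ∣ psi g d) :
    e ∣ ∏ i, (d i).gcd (e ^ 2) := by
  have he0 : e ≠ 0 := by rintro rfl; exact (psi_pos hd).ne' (Nat.zero_dvd.mp he)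
  have hG0 : (∏ i, (d i).gcd (e ^ 2)) ≠ 0 :=
    (Finset.prod_pos fun i _ => Nat.gcd_pos_of_pos_left _ (hd i)).ne'
  rw [← Nat.factorization_le_iff_dvd he0 hG0, Finsupp.le_def]
  intro p
  by_cases hp : p.Prime
  · rw [G_fact hd he0 p]
    have i0 : Fin g := ⟨0, by omega⟩
    obtain ⟨i, -, hi⟩ := Finset.exists_mem_eq_sup Finset.univ ⟨i0, mem_univ i0⟩
      (fun i => (d i).factorization p)
    have hterm : min ((d i).factorization p) (2 * e.factorization p) ≤
        ∑ j, min ((d j).factorization p) (2 * e.factorization p) :=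
      Finset.single_le_sum (f := fun j => min ((d j).factorization p) (2 * e.factorization p))
        (fun _ _ => Nat.zero_le _) (mem_univ i)
    have ht := e_fact_le hd he p
    rw [psi_fact hd p hp] at ht
    split_ifs at ht with hmem
    · have := sup_fact_pos hd hmem
      rw [← hi] at *
      omega
    · omega
  · rw [Nat.factorization_eq_zero_of_not_prime _ hp]
    exact Nat.zero_le _

lemma dquot_pos (hd : ∀ i, 0 < d i) (i : Fin g) : 0 < d i / (d i).gcd (e ^ 2) :=
  Nat.div_pos (Nat.le_of_dvd (hd i) (Nat.gcd_dvd_left _ _))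
    (Nat.gcd_pos_of_pos_left _ (hd i))

lemma prod_quot_mul (hd : ∀ i, 0 < d i) :
    (∏ i, d i / (d i).gcd (e ^ 2)) * (∏ i, (d i).gcd (e ^ 2)) = ∏ i, d i := by
  rw [← Finset.prod_mul_distrib]
  exact Finset.prod_congr rfl fun i _ => Nat.div_mul_cancel (Nat.gcd_dvd_left _ _)

/-- The radical identity: primes dividing `ψ/e` are exactly primes dividing `∏ dᵢ'`. -/
lemma radical_iff (hd : ∀ i, 0 < d i) (he : e ∣ psi g d) (p : ℕ) (hp : p.Prime) :
    (p ∣ psi g d / e ↔ p ∣ ∏ i, d i / (d i).gcd (e ^ 2)) := by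
  have he0 : e ≠ 0 := by rintro rfl; exact (psi_pos hd).ne' (Nat.zero_dvd.mp he)
  have hq0 : (psi g d / e) ≠ 0 :=
    (Nat.div_pos (Nat.le_of_dvd (psi_pos hd) he) (Nat.pos_of_ne_zero he0)).ne'
  have hlhs : p ∣ psi g d / e ↔
      e.factorization p < (psi g d).factorization p := by
    rw [hp.dvd_iff_one_le_factorization hq0, Nat.factorization_div he, Finsupp.tsub_apply]
    have := e_fact_le hd he p
    omega
  have hrhs : (p ∣ ∏ i, d i / (d i).gcd (e ^ 2)) ↔
      2 * e.factorization p < Finset.univ.sup fun i => (d i).factorization p := by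
    rw [Prime.dvd_finset_prod_iff hp.prime]
    constructor
    · rintro ⟨i, -, hi⟩
      have h1 := (hp.dvd_iff_one_le_factorization (dquot_pos hd i).ne').mp hi
      rw [Nat.factorization_div (Nat.gcd_dvd_left _ _), Finsupp.tsub_apply,
        gcd_fact hd he0 i p] at h1
      refine lt_of_lt_of_le (by omega) (Finset.le_sup (mem_univ i))
    · intro hlt
      obtain ⟨i, -, hi⟩ := Finset.lt_sup_iff.mp hlt
      refine ⟨i, mem_univ i, ?_⟩
      rw [hp.dvd_iff_one_le_factorization (dquot_pos hd i).ne',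
        Nat.factorization_div (Nat.gcd_dvd_left _ _), Finsupp.tsub_apply,
        gcd_fact hd he0 i p]
      omega
  rw [hlhs, hrhs]
  have ht := e_fact_le hd he p
  rw [psi_fact hd p hp] at ht ⊢
  split_ifs at ht ⊢ with hmem
  · omega
  · -- p not a prime factor of the product: sup is 0
    have hsup : (Finset.univ.sup fun i => (d i).factorization p) ≤ 0 := by
      refine Finset.sup_le fun i _ => le_of_eq ?_
      have : ¬ p ∣ d i := fun hdvd => hmem (Nat.mem_primeFactors.mpr
        ⟨hp, hdvd.trans (Finset.dvd_prod_of_mem d (mem_univ i)), (prodd_pos hd).ne'⟩)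
      exact Nat.factorization_eq_zero_of_not_dvd this
    omega

end Fact


/-- the transition formula expressing `ρ` in terms of `ρ*`. -/
theorem stmt1 (g : ℕ) (hg : 2 ≤ g) (a b c : Fin g → ℤ)
    (d : Fin g → ℕ) (hd : ∀ i, 0 < d i) :
    rho g a b c d =
      ∑ e ∈ (psi g d).divisors,
        rhostar g a b c (fun i => d i / Nat.gcd (d i) (e ^ 2)) *
          ((∏ i, Nat.gcd (d i) (e ^ 2)) ^ 2 / e ^ 2) := by
  have hD0 : 0 < ∏ i, d i := prodd_pos hd
  have hψ0 : 0 < psi g d := psi_pos hd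
  unfold rho
  rw [Finset.card_eq_sum_card_fiberwise
    (f := fun x : ℕ × ℕ => Nat.gcd (Nat.gcd x.1 x.2) (psi g d)) (t := (psi g d).divisors)
    (fun x _ => Nat.mem_divisors.mpr ⟨Nat.gcd_dvd_right _ _, hψ0.ne'⟩)]
  refine Finset.sum_congr rfl fun e he => ?_
  obtain ⟨heψ, -⟩ := Nat.mem_divisors.mp he
  have he0 : e ≠ 0 := by rintro rfl; exact hψ0.ne' (Nat.zero_dvd.mp heψ)
  have hepos : 0 < e := Nat.pos_of_ne_zero he0
  set G := ∏ i, Nat.gcd (d i) (e ^ 2) with hGdef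
  set D' := ∏ i, d i / Nat.gcd (d i) (e ^ 2) with hD'def
  have hD'pos : 0 < D' := Finset.prod_pos fun i _ => dquot_pos hd i
  have hDGD : D' * G = ∏ i, d i := prod_quot_mul hd
  have heG : e ∣ G := e_dvd_G hg hd heψ
  have heD : e ∣ ∏ i, d i := heψ.trans (psi_dvd hd)
  rw [Finset.filter_filter]
  -- the key coprimality criterion
  have key : ∀ m : ℕ, (Nat.gcd (e * m) (psi g d) = e ↔ Nat.gcd m D' = 1) := by
    intro m
    have h1 : Nat.gcd (e * m) (psi g d) = e * Nat.gcd m (psi g d / e) := by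
      conv_lhs => rw [← Nat.mul_div_cancel' heψ]
      exact Nat.gcd_mul_left e m _
    rw [h1, mul_eq_left₀ he0]
    exact coprime_congr (fun p hp => radical_iff hd heψ p hp) m
  -- divisibility transfer
  have hdiv : ∀ (y : ℕ × ℕ) (i : Fin g),
      ((d i : ℤ) ∣ qf a b c i (((e * y.1 : ℕ) : ℤ), ((e * y.2 : ℕ) : ℤ)) ↔
        ((d i / Nat.gcd (d i) (e ^ 2) : ℕ) : ℤ) ∣ qf a b c i ((y.1 : ℤ), (y.2 : ℤ))) := by
    intro y i
    have h1 : qf a b c i (((e * y.1 : ℕ) : ℤ), ((e * y.2 : ℕ) : ℤ))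
        = ((e ^ 2 : ℕ) : ℤ) * qf a b c i ((y.1 : ℤ), (y.2 : ℤ)) := by
      push_cast
      exact qf_mul a b c i _ _ _
    rw [h1]
    exact nat_dvd_mul_iff (d i) (e ^ 2) (hd i).ne' _
  -- the bijection x ↦ x/e
  have hbij : (Finset.filter (fun x : ℕ × ℕ =>
        (∀ i, (d i : ℤ) ∣ qf a b c i ((x.1 : ℤ), (x.2 : ℤ))) ∧
          Nat.gcd (Nat.gcd x.1 x.2) (psi g d) = e)
        ((range (∏ i, d i)) ×ˢ (range (∏ i, d i)))).card
      = (Finset.filter (fun y : ℕ × ℕ =>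
        (∀ i, ((d i / Nat.gcd (d i) (e ^ 2) : ℕ) : ℤ) ∣ qf a b c i ((y.1 : ℤ), (y.2 : ℤ))) ∧
          Nat.gcd (Nat.gcd y.1 y.2) D' = 1)
        ((range ((∏ i, d i) / e)) ×ˢ (range ((∏ i, d i) / e)))).card := by
    apply Finset.card_nbij' (fun x => (x.1 / e, x.2 / e)) (fun y => (e * y.1, e * y.2))
    · rintro ⟨x1, x2⟩ hx
      simp only [Finset.mem_coe, mem_filter, mem_product, mem_range] at hx ⊢
      obtain ⟨⟨hx1, hx2⟩, hq, hgcd⟩ := hx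
      have hed : e ∣ Nat.gcd x1 x2 := by rw [← hgcd]; exact Nat.gcd_dvd_left _ _
      have he1 : e ∣ x1 := hed.trans (Nat.gcd_dvd_left _ _)
      have he2 : e ∣ x2 := hed.trans (Nat.gcd_dvd_right _ _)
      refine ⟨⟨Nat.div_lt_div_of_lt_of_dvd heD hx1, Nat.div_lt_div_of_lt_of_dvd heD hx2⟩,
        ?_, ?_⟩
      · intro i
        refine (hdiv (x1 / e, x2 / e) i).mp ?_
        rw [Nat.mul_div_cancel' he1, Nat.mul_div_cancel' he2]
        exact hq i
      · refine (key _).mp ?_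
        have hmul : e * Nat.gcd (x1 / e) (x2 / e) = Nat.gcd x1 x2 := by
          conv_rhs => rw [← Nat.mul_div_cancel' he1, ← Nat.mul_div_cancel' he2]
          rw [Nat.gcd_mul_left]
        rw [hmul]
        exact hgcd
    · rintro ⟨y1, y2⟩ hy
      simp only [Finset.mem_coe, mem_filter, mem_product, mem_range] at hy ⊢
      obtain ⟨⟨hy1, hy2⟩, hq, hgcd⟩ := hy
      have hbound : ∀ u : ℕ, u < (∏ i, d i) / e → e * u < ∏ i, d i := by
        intro u hu
        have := mul_lt_mul_of_pos_left hu hepos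
        rwa [Nat.mul_div_cancel' heD] at this
      refine ⟨⟨hbound _ hy1, hbound _ hy2⟩, ?_, ?_⟩
      · intro i
        exact (hdiv (y1, y2) i).mpr (hq i)
      · rw [Nat.gcd_mul_left]
        exact (key _).mpr hgcd
    · rintro ⟨x1, x2⟩ hx
      simp only [Finset.mem_coe, mem_filter, mem_product, mem_range] at hx
      obtain ⟨-, -, hgcd⟩ := hx
      have hed : e ∣ Nat.gcd x1 x2 := by rw [← hgcd]; exact Nat.gcd_dvd_left _ _
      have he1 : e ∣ x1 := hed.trans (Nat.gcd_dvd_left _ _)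
      have he2 : e ∣ x2 := hed.trans (Nat.gcd_dvd_right _ _)
      show (e * (x1 / e), e * (x2 / e)) = (x1, x2)
      rw [Nat.mul_div_cancel' he1, Nat.mul_div_cancel' he2]
    · rintro ⟨y1, y2⟩ hy
      show (e * y1 / e, e * y2 / e) = (y1, y2)
      rw [Nat.mul_div_cancel_left _ hepos, Nat.mul_div_cancel_left _ hepos]
  rw [hbij]
  -- periodicity of the conditions modulo D'
  have hgcdmod : ∀ u v : ℕ,
      Nat.gcd (Nat.gcd (u % D') (v % D')) D' = Nat.gcd (Nat.gcd u v) D' := by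
    intro u v
    rw [Nat.gcd_assoc, Nat.gcd_assoc, (Nat.mod_modEq v D').gcd_eq,
      (Nat.ModEq.of_dvd (Nat.gcd_dvd_right v D') (Nat.mod_modEq u D')).gcd_eq]
  have hper : ∀ y : ℕ × ℕ,
      ((∀ i, ((d i / Nat.gcd (d i) (e ^ 2) : ℕ) : ℤ) ∣ qf a b c i ((y.1 : ℤ), (y.2 : ℤ))) ∧
        Nat.gcd (Nat.gcd y.1 y.2) D' = 1)
      ↔ ((∀ i, ((d i / Nat.gcd (d i) (e ^ 2) : ℕ) : ℤ) ∣
            qf a b c i (((y.1 % D' : ℕ) : ℤ), ((y.2 % D' : ℕ) : ℤ))) ∧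
        Nat.gcd (Nat.gcd (y.1 % D') (y.2 % D')) D' = 1) := by
    intro y
    rw [hgcdmod]
    refine and_congr_left' (forall_congr' fun i => ?_)
    have hdd : (d i / Nat.gcd (d i) (e ^ 2)) ∣ D' :=
      Finset.dvd_prod_of_mem _ (mem_univ i)
    have h1 := (Int.natCast_modEq_iff.mpr
      (Nat.ModEq.of_dvd hdd (Nat.mod_modEq y.1 D'))).symm.dvd
    have h2 := (Int.natCast_modEq_iff.mpr
      (Nat.ModEq.of_dvd hdd (Nat.mod_modEq y.2 D'))).symm.dvd
    exact qf_dvd_congr a b c i _ _ _ _ _ h1 h2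
  have hbox : (∏ i, d i) / e = D' * (G / e) := by
    rw [← hDGD, Nat.mul_div_assoc D' heG]
  rw [hbox, count_box D' (G / e) hD'pos _ hper]
  have hstar : rhostar g a b c (fun i => d i / Nat.gcd (d i) (e ^ 2))
      = ((range D' ×ˢ range D').filter (fun y : ℕ × ℕ =>
        (∀ i, ((d i / Nat.gcd (d i) (e ^ 2) : ℕ) : ℤ) ∣ qf a b c i ((y.1 : ℤ), (y.2 : ℤ))) ∧
          Nat.gcd (Nat.gcd y.1 y.2) D' = 1)).card := rfl
  rw [← hstar, Nat.div_pow heG, Nat.mul_comm]
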